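/- The n×n matrix with (i,j) entry σ(i) − σ(gcd(i,j)) factors as C · diag(1,2,…,n) · Dᵀ, where σ is the sum-of-divisors function, C is the divisibility matrix and D its complement. -/

import Mathlib

open Finset Matrix

theorem gcd_matrix_sigma_case (n : ℕ) :
    (Matrix.of fun i j : Fin n =>
        ((∑ d ∈ (i.1 + 1).divisors, (d : ℂ)) -
          ∑ d ∈ (Nat.gcd (i.1 + 1) (j.1 + 1)).divisors, (d : ℂ))) =
      (Matrix.of fun i j : Fin n => if (j.1 + 1) ∣ (i.1 + 1) then (1 : ℂ) else 0) *
        Matrix.diagonal (fun k : Fin n => ((k.1 + 1 : ℕ) : ℂ)) *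
        (Matrix.of fun i j : Fin n => if ¬ (j.1 + 1) ∣ (i.1 + 1) then (1 : ℂ) else 0)ᵀ := by
  ext i j
  rw [Matrix.mul_apply]
  simp only [Matrix.mul_diagonal, Matrix.transpose_apply, Matrix.of_apply]
  have hsub : (Nat.gcd (i.1+1) (j.1+1)).divisors
      = (i.1+1).divisors.filter (fun d => d ∣ (j.1+1)) := by
    ext d
    simp [Nat.mem_divisors, Nat.dvd_gcd_iff, Nat.gcd_eq_zero_iff]

  rw [hsub, ← Finset.sum_filter_add_sum_filter_not (i.1+1).divisors (fun d => d ∣ (j.1+1))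
    (fun d => (d : ℂ)), add_sub_cancel_left]
  have hterm : ∀ k : Fin n,
      (if (k.1+1) ∣ (i.1+1) then (1:ℂ) else 0) * ((k.1+1 : ℕ) : ℂ) *
        (if ¬ (k.1+1) ∣ (j.1+1) then (1:ℂ) else 0)
      = if (k.1+1) ∣ (i.1+1) ∧ ¬ (k.1+1) ∣ (j.1+1) then ((k.1+1 : ℕ) : ℂ) else 0 := by
    intro k; split_ifs <;> simp_all
  rw [Finset.sum_congr rfl (fun k _ => hterm k), Fin.sum_univ_eq_sum_range
    (fun k => if (k+1) ∣ (i.1+1) ∧ ¬ (k+1) ∣ (j.1+1) then ((k+1 : ℕ) : ℂ) else 0) n,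
    ← Finset.sum_filter]
  refine Finset.sum_nbij' (fun d => d - 1) (fun k => k + 1) ?_ ?_ ?_ ?_ ?_
  · intro d hd
    simp only [Finset.mem_filter, Nat.mem_divisors] at hd
    have h1 : 1 ≤ d := Nat.pos_of_dvd_of_pos hd.1.1 (Nat.succ_pos _)
    have hle : d ≤ i.1 + 1 := Nat.le_of_dvd (Nat.succ_pos _) hd.1.1
    have : d - 1 < n := by omega
    simp only [Finset.mem_filter, Finset.mem_range]
    refine ⟨this, ?_, ?_⟩ <;> rw [Nat.sub_add_cancel h1]
    · exact hd.1.1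
    · exact hd.2
  · intro k hk
    simp only [Finset.mem_filter, Finset.mem_range] at hk
    simp [Nat.mem_divisors, hk.2.1, hk.2.2]
  · intro d hd
    simp only [Finset.mem_filter, Nat.mem_divisors] at hd
    have h1 : 1 ≤ d := Nat.pos_of_dvd_of_pos hd.1.1 (Nat.succ_pos _)
    omega
  · intro k _; omega
  · intro d hd
    simp only [Finset.mem_filter, Nat.mem_divisors] at hd
    have h1 : 1 ≤ d := Nat.pos_of_dvd_of_pos hd.1.1 (Nat.succ_pos _)
    rw [Nat.sub_add_cancel h1]
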